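/- Let N be a quadratic module in a commutative unital ring R. Among all quadratic modules M in M_n(R) with M ∩ (R·I_n) = N·I_n, the smallest is N^n = {Σ_i n_i A_i^T A_i : n_i ∈ N, A_i ∈ M_n(R)} and the largest is ind(N) = {A symmetric : v^T A v ∈ N for all v ∈ R^n}. -/

import Mathlib

open Matrix

/-- A quadratic module in `M_n(R)`. -/
def IsQM {n : ℕ} {R : Type*} [CommRing R] (M : Set (Matrix (Fin n) (Fin n) R)) : Prop :=
  (∀ A ∈ M, A.IsSymm) ∧ (1 : Matrix (Fin n) (Fin n) R) ∈ M ∧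
  (∀ a ∈ M, ∀ b ∈ M, a + b ∈ M) ∧
  ∀ (A : Matrix (Fin n) (Fin n) R), ∀ m ∈ M, Aᵀ * m * A ∈ M

/-- A quadratic module in a commutative ring `R`. -/
def IsQMR {R : Type*} [CommRing R] (M : Set R) : Prop :=
  1 ∈ M ∧ (∀ a ∈ M, ∀ b ∈ M, a + b ∈ M) ∧ ∀ r : R, ∀ m ∈ M, r ^ 2 * m ∈ M

/-- `N^n = { Σᵢ nᵢ Aᵢᵀ Aᵢ : nᵢ ∈ N, Aᵢ ∈ M_n(R) }`. -/
def Npow {R : Type*} [CommRing R] (n : ℕ) (N : Set R) : Set (Matrix (Fin n) (Fin n) R) :=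
  {A | ∃ (k : ℕ) (c : Fin k → R) (B : Fin k → Matrix (Fin n) (Fin n) R),
    (∀ i, c i ∈ N) ∧ A = ∑ i, c i • ((B i)ᵀ * B i)}

/-- `ind(N) = { A symmetric : vᵀ A v ∈ N for all v ∈ Rⁿ }`. -/
def indN {R : Type*} [CommRing R] (n : ℕ) (N : Set R) : Set (Matrix (Fin n) (Fin n) R) :=
  {A | A.IsSymm ∧ ∀ v : Fin n → R, v ⬝ᵥ A.mulVec v ∈ N}

private lemma setSum_mem {α : Type*} [AddCommMonoid α] {S : Set α} (h0 : (0:α) ∈ S)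
    (hadd : ∀ a ∈ S, ∀ b ∈ S, a + b ∈ S) {ι : Type*} (s : Finset ι) (f : ι → α)
    (hf : ∀ i ∈ s, f i ∈ S) : ∑ i ∈ s, f i ∈ S := by
  classical
  induction s using Finset.induction with
  | empty => simpa
  | insert _ _ h ih =>
    rw [Finset.sum_insert h]
    exact hadd _ (hf _ (Finset.mem_insert_self _ _))
      _ (ih fun i hi => hf i (Finset.mem_insert_of_mem hi))

private lemma congr_sum_eq {n : ℕ} {R : Type*} [CommRing R] (A : Matrix (Fin n) (Fin n) R)
    (v : Fin n → R) :
    ∑ j : Fin n, ((Matrix.of fun i k => if k = j then v i else 0)ᵀ * A *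
      (Matrix.of fun i k => if k = j then v i else 0)) =
    (v ⬝ᵥ A.mulVec v) • (1 : Matrix (Fin n) (Fin n) R) := by
  ext a b
  simp [Matrix.sum_apply, Matrix.mul_apply, Matrix.one_apply, dotProduct, Matrix.mulVec,
    Finset.mul_sum, Finset.sum_mul, ite_and, mul_ite, ite_mul, Finset.sum_ite_eq,
    Finset.sum_ite_eq', mul_comm, mul_left_comm]
  by_cases h : a = b
  · subst h
    simp only [if_pos rfl]
    rw [Finset.sum_comm]
    exact Finset.sum_congr rfl fun x _ => Finset.sum_congr rfl fun y _ => by ring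
  · simp [h, Ne.symm h]

theorem stmt7 {n : ℕ} [NeZero n] {R : Type*} [CommRing R] (N : Set R) (hN : IsQMR N) :
    IsQM (Npow n N) ∧
      (Npow n N) ∩ (Set.range fun r : R => r • (1 : Matrix (Fin n) (Fin n) R)) =
        (fun r : R => r • (1 : Matrix (Fin n) (Fin n) R)) '' N ∧
      IsQM (indN n N) ∧
      (indN n N) ∩ (Set.range fun r : R => r • (1 : Matrix (Fin n) (Fin n) R)) =
        (fun r : R => r • (1 : Matrix (Fin n) (Fin n) R)) '' N ∧
      ∀ M : Set (Matrix (Fin n) (Fin n) R), IsQM M →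
        M ∩ (Set.range fun r : R => r • (1 : Matrix (Fin n) (Fin n) R)) =
          (fun r : R => r • (1 : Matrix (Fin n) (Fin n) R)) '' N →
        Npow n N ⊆ M ∧ M ⊆ indN n N := by
  obtain ⟨h1N, haddN, hsqN⟩ := hN
  have h0N : (0:R) ∈ N := by simpa using hsqN 0 1 h1N
  -- r • 1 ∈ Npow for r ∈ N
  have hsmem : ∀ r ∈ N, r • (1 : Matrix (Fin n) (Fin n) R) ∈ Npow n N := by
    intro r hr
    exact ⟨1, fun _ => r, fun _ => 1, fun _ => hr, by simp⟩
  -- Npow is a quadratic module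
  have hQM1 : IsQM (Npow n N) := by
    refine ⟨?_, ?_, ?_, ?_⟩
    · rintro A ⟨k, c, B, hc, rfl⟩
      simp [Matrix.IsSymm, Matrix.transpose_sum, Matrix.transpose_smul, Matrix.transpose_mul]
    · exact ⟨1, fun _ => 1, fun _ => 1, fun _ => h1N, by simp⟩
    · rintro a ⟨k, c, B, hc, rfl⟩ b ⟨k', c', B', hc', rfl⟩
      refine ⟨k + k', Fin.append c c', Fin.append B B', ?_, ?_⟩
      · intro i
        induction i using Fin.addCases with
        | left j => simpa [Fin.append_left] using hc j
        | right j => simpa [Fin.append_right] using hc' j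
      · rw [Fin.sum_univ_add]
        simp [Fin.append_left, Fin.append_right]
    · rintro A m ⟨k, c, B, hc, rfl⟩
      refine ⟨k, c, fun i => B i * A, hc, ?_⟩
      rw [Matrix.mul_sum, Matrix.sum_mul]
      exact Finset.sum_congr rfl fun i _ => by
        simp [Matrix.mul_smul, Matrix.smul_mul, Matrix.transpose_mul, Matrix.mul_assoc]
  -- Npow intersection
  have hcap1 : (Npow n N) ∩ (Set.range fun r : R => r • (1 : Matrix (Fin n) (Fin n) R)) =
      (fun r : R => r • (1 : Matrix (Fin n) (Fin n) R)) '' N := by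
    apply Set.Subset.antisymm
    · rintro x ⟨⟨k, c, B, hc, hx⟩, r, rfl⟩
      refine ⟨r, ?_, rfl⟩
      have h := congrFun (congrFun hx 0) 0
      have hr : r = ∑ i : Fin k, ∑ j : Fin n, c i * (B i j 0 * B i j 0) := by
        simpa [Matrix.sum_apply, Matrix.mul_apply, Matrix.one_apply, Finset.mul_sum] using h
      rw [hr]
      refine setSum_mem h0N haddN _ _ fun i _ => setSum_mem h0N haddN _ _ fun j _ => ?_
      have := hsqN (B i j 0) (c i) (hc i)
      have e : c i * (B i j 0 * B i j 0) = (B i j 0)^2 * c i := by ring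
      rwa [e]
    · rintro x ⟨r, hr, rfl⟩
      exact ⟨hsmem r hr, r, rfl⟩
  -- indN is a quadratic module
  have hQM2 : IsQM (indN n N) := by
    refine ⟨fun A hA => hA.1, ⟨Matrix.isSymm_one, ?_⟩, ?_, ?_⟩
    · intro v
      have : v ⬝ᵥ (1 : Matrix (Fin n) (Fin n) R).mulVec v = ∑ i, (v i)^2 * 1 := by
        simp [dotProduct, sq]
      rw [this]
      exact setSum_mem h0N haddN _ _ fun i _ => hsqN (v i) 1 h1N
    · rintro a ⟨hsa, hva⟩ b ⟨hsb, hvb⟩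
      refine ⟨hsa.add hsb, fun v => ?_⟩
      have : v ⬝ᵥ (a + b).mulVec v = v ⬝ᵥ a.mulVec v + v ⬝ᵥ b.mulVec v := by
        simp [Matrix.add_mulVec]
      rw [this]
      exact haddN _ (hva v) _ (hvb v)
    · rintro A m ⟨hs, hv⟩
      refine ⟨?_, fun v => ?_⟩
      · simp [Matrix.IsSymm, Matrix.transpose_mul, Matrix.mul_assoc, hs.eq]
      · have : v ⬝ᵥ (Aᵀ * m * A).mulVec v = (A.mulVec v) ⬝ᵥ m.mulVec (A.mulVec v) := by
          rw [← Matrix.mulVec_mulVec, ← Matrix.mulVec_mulVec, Matrix.dotProduct_mulVec,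
            Matrix.vecMul_transpose]
        rw [this]
        exact hv _
  -- indN intersection
  have hcap2 : (indN n N) ∩ (Set.range fun r : R => r • (1 : Matrix (Fin n) (Fin n) R)) =
      (fun r : R => r • (1 : Matrix (Fin n) (Fin n) R)) '' N := by
    apply Set.Subset.antisymm
    · rintro x ⟨⟨_, hv⟩, r, rfl⟩
      refine ⟨r, ?_, rfl⟩
      have := hv (Pi.single 0 1)
      simpa [Matrix.smul_mulVec, dotProduct, Pi.single_apply, mul_ite, ite_mul] using this
    · rintro x ⟨r, hr, rfl⟩
      refine ⟨⟨by simp [Matrix.IsSymm], fun v => ?_⟩, r, rfl⟩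
      have : v ⬝ᵥ (r • (1 : Matrix (Fin n) (Fin n) R)).mulVec v = ∑ i, (v i)^2 * r := by
        simp only [Matrix.smul_mulVec, Matrix.one_mulVec, dotProduct, Pi.smul_apply,
          smul_eq_mul]
        exact Finset.sum_congr rfl fun i _ => by ring
      rw [this]
      exact setSum_mem h0N haddN _ _ fun i _ => hsqN (v i) r hr
  refine ⟨hQM1, hcap1, hQM2, hcap2, ?_⟩
  intro M hM hMcap
  have h0M : (0 : Matrix (Fin n) (Fin n) R) ∈ M := by
    simpa using hM.2.2.2 0 1 hM.2.1
  have hscal : ∀ r ∈ N, r • (1 : Matrix (Fin n) (Fin n) R) ∈ M := by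
    intro r hr
    have : r • (1 : Matrix (Fin n) (Fin n) R) ∈
        M ∩ (Set.range fun r : R => r • (1 : Matrix (Fin n) (Fin n) R)) := by
      rw [hMcap]; exact ⟨r, hr, rfl⟩
    exact this.1
  constructor
  · rintro x ⟨k, c, B, hc, rfl⟩
    refine setSum_mem h0M hM.2.2.1 _ _ fun i _ => ?_
    have := hM.2.2.2 (B i) _ (hscal (c i) (hc i))
    have e : (B i)ᵀ * (c i • 1) * (B i) = c i • ((B i)ᵀ * B i) := by
      simp [Matrix.mul_smul, Matrix.smul_mul]
    rwa [e] at this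
  · intro A hA
    refine ⟨hM.1 A hA, fun v => ?_⟩
    have hsum : (v ⬝ᵥ A.mulVec v) • (1 : Matrix (Fin n) (Fin n) R) ∈ M := by
      rw [← congr_sum_eq A v]
      exact setSum_mem h0M hM.2.2.1 _ _ fun j _ => hM.2.2.2 _ _ hA
    have hmem : (v ⬝ᵥ A.mulVec v) • (1 : Matrix (Fin n) (Fin n) R) ∈
        (fun r : R => r • (1 : Matrix (Fin n) (Fin n) R)) '' N := by
      rw [← hMcap]; exact ⟨hsum, _, rfl⟩
    obtain ⟨s, hs, he⟩ := hmem
    have hse : s = v ⬝ᵥ A.mulVec v := by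
      have := congrFun (congrFun he 0) 0
      simpa [Matrix.one_apply] using this
    exact hse ▸ hs
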